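/- Transport equation satisfied by the nonlinear predictor (scalar state case): let D_hat > 0 and let f : R x R -> R be continuously differentiable. Suppose u_hat : [0,1] x [t0, infinity) -> R is continuously differentiable and satisfies D_hat * u_hat_t(x,t) = u_hat_x(x,t); X : [t0, infinity) -> R is continuously differentiable and satisfies X'(t) = f( X(t), u_hat(0,t) + u_tilde0(t) ) for a continuous function u_tilde0; and p_hat : [0,1] x [t0, infinity) -> R is continuously differentiable and satisfies p_hat(x,t) = X(t) + D_hat * integral from 0 to x of f( p_hat(y,t), u_hat(y,t) ) dy. Then for all x in [0,1] and t >= t0, D_hat * p_hat_t(x,t) = p_hat_x(x,t) + D_hat * exp( D_hat * integral from 0 to x of (partial of f with respect to its first argument)( p_hat(y,t), u_hat(y,t) ) dy ) * ( f( X(t), u_hat(0,t) + u_tilde0(t) ) - f( X(t), u_hat(0,t) ) ). -/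

import Mathlib

open MeasureTheory intervalIntegral Set

noncomputable section

lemma slice1_hasDerivAt (F : ℝ → ℝ → ℝ) (hF : ContDiff ℝ 1 (Function.uncurry F)) (x t : ℝ) :
    HasDerivAt (fun y => F y t) (fderiv ℝ (Function.uncurry F) (x, t) (1, 0)) x := by
  have h1 : HasDerivAt (fun y : ℝ => (y, t)) ((1 : ℝ), (0 : ℝ)) x :=
    (hasDerivAt_id x).prodMk (hasDerivAt_const x t)
  exact ((hF.differentiable one_ne_zero) (x, t)).hasFDerivAt.comp_hasDerivAt x h1

lemma slice2_hasDerivAt (F : ℝ → ℝ → ℝ) (hF : ContDiff ℝ 1 (Function.uncurry F)) (x t : ℝ) :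
    HasDerivAt (fun s => F x s) (fderiv ℝ (Function.uncurry F) (x, t) (0, 1)) t := by
  have h1 : HasDerivAt (fun s : ℝ => (x, s)) ((0 : ℝ), (1 : ℝ)) t :=
    (hasDerivAt_const t x).prodMk (hasDerivAt_id t)
  exact ((hF.differentiable one_ne_zero) (x, t)).hasFDerivAt.comp_hasDerivAt t h1

lemma fderiv_apply_cont (F : ℝ → ℝ → ℝ) (hF : ContDiff ℝ 1 (Function.uncurry F)) (v : ℝ × ℝ) :
    Continuous fun p : ℝ × ℝ => fderiv ℝ (Function.uncurry F) p v := by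
  exact (ContinuousLinearMap.apply ℝ ℝ v).continuous.comp (hF.continuous_fderiv one_ne_zero)

lemma comp_hasDerivAt (F : ℝ → ℝ → ℝ) (hF : ContDiff ℝ 1 (Function.uncurry F))
    (g₁ g₂ : ℝ → ℝ) (d₁ d₂ s : ℝ) (h₁ : HasDerivAt g₁ d₁ s) (h₂ : HasDerivAt g₂ d₂ s) :
    HasDerivAt (fun s => F (g₁ s) (g₂ s))
      (d₁ * fderiv ℝ (Function.uncurry F) (g₁ s, g₂ s) (1, 0)
        + d₂ * fderiv ℝ (Function.uncurry F) (g₁ s, g₂ s) (0, 1)) s := by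
  have h1 : HasDerivAt (fun s => (g₁ s, g₂ s)) (d₁, d₂) s := h₁.prodMk h₂
  have h2 := ((hF.differentiable one_ne_zero) (g₁ s, g₂ s)).hasFDerivAt.comp_hasDerivAt s h1
  convert h2 using 1
  all_goals try rfl
  have : (d₁, d₂) = d₁ • ((1 : ℝ), (0 : ℝ)) + d₂ • ((0 : ℝ), (1 : ℝ)) := by simp
  rw [this, map_add, (fderiv ℝ (Function.uncurry F) (g₁ s, g₂ s)).map_smul,
    (fderiv ℝ (Function.uncurry F) (g₁ s, g₂ s)).map_smul]
  simp [smul_eq_mul]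

lemma ftc_hasDerivAt (h : ℝ → ℝ) (hc : Continuous h) (x : ℝ) :
    HasDerivAt (fun u => ∫ y in (0:ℝ)..u, h y) (h x) x :=
  intervalIntegral.integral_hasDerivAt_right (hc.intervalIntegrable _ _)
    (hc.stronglyMeasurableAtFilter _ _) hc.continuousAt

lemma hasDerivAt_param_integral
    (G G' : ℝ → ℝ → ℝ)
    (hG : Continuous fun p : ℝ × ℝ => G p.1 p.2)
    (hG' : Continuous fun p : ℝ × ℝ => G' p.1 p.2)
    (hdiff : ∀ s y, HasDerivAt (fun s => G s y) (G' s y) s)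
    (x t : ℝ) :
    HasDerivAt (fun s => ∫ y in (0:ℝ)..x, G s y) (∫ y in (0:ℝ)..x, G' t y) t := by
  have hK : IsCompact ((Icc (t-1) (t+1)) ×ˢ (uIcc (0:ℝ) x)) :=
    isCompact_Icc.prod isCompact_uIcc
  obtain ⟨M, hM⟩ := hK.exists_bound_of_continuousOn hG'.continuousOn
  have key := intervalIntegral.hasDerivAt_integral_of_dominated_loc_of_deriv_le
    (F := fun s y => G s y) (F' := fun s y => G' s y) (x₀ := t) (a := (0:ℝ)) (b := x)
    (bound := fun _ => M) (μ := volume) (s := Metric.ball t 1) (Metric.ball_mem_nhds t one_pos)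
    (Filter.Eventually.of_forall fun s =>
      ((hG.comp (continuous_const.prodMk continuous_id)).aestronglyMeasurable).restrict)
    ((hG.comp (continuous_const.prodMk continuous_id)).intervalIntegrable _ _)
    ((hG'.comp (continuous_const.prodMk continuous_id)).aestronglyMeasurable).restrict
    (Filter.Eventually.of_forall fun y hy s hs => by
      have : (s, y) ∈ (Icc (t-1) (t+1)) ×ˢ (uIcc (0:ℝ) x) := by
        constructor
        · have := Metric.mem_ball.mp hs
          rw [Real.dist_eq] at this
          constructor <;> [linarith [abs_lt.mp this] ; linarith [(abs_lt.mp this).2]]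
        · exact uIoc_subset_uIcc hy
      exact hM _ this)
    (intervalIntegrable_const)
    (Filter.Eventually.of_forall fun y hy s hs => hdiff s y)
  exact key.2

lemma gronwall_aux (a g : ℝ → ℝ) (ha : Continuous a) (hg : Continuous g) (c : ℝ)
    (heq : ∀ u ∈ Icc (0:ℝ) 1, g u = c + ∫ y in (0:ℝ)..u, a y * g y) :
    ∀ u ∈ Icc (0:ℝ) 1, g u = c * Real.exp (∫ y in (0:ℝ)..u, a y) := by
  have hag : Continuous fun y => a y * g y := ha.mul hg
  have hH : ∀ u, HasDerivAt (fun u => c + ∫ y in (0:ℝ)..u, a y * g y) (a u * g u) u :=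
    fun u => (ftc_hasDerivAt _ hag u).const_add c
  set H : ℝ → ℝ := fun u => c + ∫ y in (0:ℝ)..u, a y * g y with hHdef
  have hE : ∀ u, HasDerivAt (fun u => Real.exp (-∫ y in (0:ℝ)..u, a y))
      (Real.exp (-∫ y in (0:ℝ)..u, a y) * (-a u)) u :=
    fun u => ((ftc_hasDerivAt _ ha u).neg).exp
  set E : ℝ → ℝ := fun u => Real.exp (-∫ y in (0:ℝ)..u, a y) with hEdef
  have hK : ∀ u ∈ Ico (0:ℝ) 1, HasDerivAt (fun u => H u * E u) 0 u := by
    intro u hu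
    have h1 := (hH u).mul (hE u)
    have h2 : g u = H u := heq u (Ico_subset_Icc_self hu)
    have h3 : a u * g u * E u + H u * (E u * -a u) = 0 := by rw [h2]; ring
    exact h3 ▸ h1
  have hcont : Continuous fun u => H u * E u :=
    (continuous_iff_continuousAt.2 fun u => (hH u).continuousAt).mul
      (continuous_iff_continuousAt.2 fun u => (hE u).continuousAt)
  have hconst : ∀ u ∈ Icc (0:ℝ) 1, H u * E u = H 0 * E 0 := fun u hu =>
    constant_of_has_deriv_right_zero hcont.continuousOn
      (fun v hv => (hK v hv).hasDerivWithinAt) u hu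
  intro u hu
  have h0 : H 0 * E 0 = c := by simp [hHdef, hEdef]
  have h4 : H u * E u = c := (hconst u hu).trans h0
  have h6 : H u = c * Real.exp (∫ y in (0:ℝ)..u, a y) := by
    have h5 : E u = (Real.exp (∫ y in (0:ℝ)..u, a y))⁻¹ := by
      rw [hEdef]; simp [Real.exp_neg]
    rw [h5] at h4
    field_simp at h4
    linarith [h4]
  rw [heq u hu]; exact h6


/-- Transport equation satisfied by the nonlinear predictor (scalar state
case, Lemma B.1):
`D̂ p̂_t = p̂_x + D̂ exp(D̂ ∫₀ˣ f_ρ(p̂,û)) (f(X, û(0)+ũ₀) - f(X, û(0)))`. -/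
theorem nonlinear_predictor_transport_equation
    (D : ℝ) (hD : 0 < D) (t0 : ℝ)
    (f : ℝ → ℝ → ℝ) (hf : ContDiff ℝ 1 (Function.uncurry f))
    (uh : ℝ → ℝ → ℝ) (huh : ContDiff ℝ 1 (Function.uncurry uh))
    -- the observer transport equation D̂ û_t = û_x
    (huhPDE : ∀ x t, D * deriv (fun s => uh x s) t = deriv (fun y => uh y t) x)
    (ut0 : ℝ → ℝ) (hut0 : Continuous ut0)
    (X : ℝ → ℝ)
    -- the plant X'(t) = f(X(t), û(0,t) + ũ₀(t))
    (hX : ∀ t, t0 ≤ t → HasDerivAt X (f (X t) (uh 0 t + ut0 t)) t)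
    (ph : ℝ → ℝ → ℝ) (hph : ContDiff ℝ 1 (Function.uncurry ph))
    -- the predictor p̂(x,t) = X(t) + D̂ ∫₀ˣ f(p̂(y,t), û(y,t)) dy
    (hpdef : ∀ x ∈ Icc (0 : ℝ) 1, ∀ t, t0 ≤ t →
      ph x t = X t + D * ∫ y in (0 : ℝ)..x, f (ph y t) (uh y t)) :
    ∀ x ∈ Icc (0 : ℝ) 1, ∀ t, t0 ≤ t →
      D * deriv (fun s => ph x s) t
        = deriv (fun y => ph y t) x
          + D * Real.exp (D * ∫ y in (0 : ℝ)..x,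
                deriv (fun z => f z (uh y t)) (ph y t))
            * (f (X t) (uh 0 t + ut0 t) - f (X t) (uh 0 t)) := by
  --
  intro x hx t ht
  have hfc : Continuous (Function.uncurry f) := hf.continuous
  have huc : Continuous (Function.uncurry uh) := huh.continuous
  have hpc : Continuous (Function.uncurry ph) := hph.continuous
  have hline : Continuous fun y : ℝ => (y, t) := continuous_id.prodMk continuous_const
  set pt : ℝ → ℝ := fun y => fderiv ℝ (Function.uncurry ph) (y, t) (0, 1) with hptdef
  set px : ℝ → ℝ := fun y => fderiv ℝ (Function.uncurry ph) (y, t) (1, 0) with hpxdef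
  set ut : ℝ → ℝ := fun y => fderiv ℝ (Function.uncurry uh) (y, t) (0, 1) with hutdef
  set a : ℝ → ℝ := fun y => fderiv ℝ (Function.uncurry f) (ph y t, uh y t) (1, 0) with hadef
  set b : ℝ → ℝ := fun y => fderiv ℝ (Function.uncurry f) (ph y t, uh y t) (0, 1) with hbdef
  set c : ℝ := f (X t) (uh 0 t + ut0 t) - f (X t) (uh 0 t) with hcdef
  have hpt_c : Continuous pt := (fderiv_apply_cont ph hph (0, 1)).comp hline
  have hpx_c : Continuous px := (fderiv_apply_cont ph hph (1, 0)).comp hline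
  have hut_c : Continuous ut := (fderiv_apply_cont uh huh (0, 1)).comp hline
  have hpht_c : Continuous fun y => ph y t := hpc.comp hline
  have huht_c : Continuous fun y => uh y t := huc.comp hline
  have hpair : Continuous fun y => (ph y t, uh y t) := hpht_c.prodMk huht_c
  have ha_c : Continuous a := (fderiv_apply_cont f hf (1, 0)).comp hpair
  have hb_c : Continuous b := (fderiv_apply_cont f hf (0, 1)).comp hpair
  have hphi_c : Continuous fun y => f (ph y t) (uh y t) := hfc.comp hpair
  have h0mem : (0 : ℝ) ∈ Icc (0 : ℝ) 1 := ⟨le_refl 0, zero_le_one⟩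
  have hph0 : ph 0 t = X t := by
    have := hpdef 0 h0mem t ht
    simpa using this
  -- the x-derivative of the predictor
  have hpx_eq : ∀ y ∈ Icc (0 : ℝ) 1, px y = D * f (ph y t) (uh y t) := by
    intro y hy
    have hPhi : HasDerivAt (fun u => X t + D * ∫ z in (0 : ℝ)..u, f (ph z t) (uh z t))
        (D * f (ph y t) (uh y t)) y :=
      ((ftc_hasDerivAt _ hphi_c y).const_mul D).const_add (X t)
    have h1 : HasDerivWithinAt (fun z => ph z t) (D * f (ph y t) (uh y t)) (Icc 0 1) y :=
      hPhi.hasDerivWithinAt.congr (fun z hz => hpdef z hz t ht) (hpdef y hy t ht)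
    have h2 : HasDerivWithinAt (fun z => ph z t) (px y) (Icc 0 1) y :=
      (slice1_hasDerivAt ph hph y t).hasDerivWithinAt
    have hu := (uniqueDiffOn_Icc (zero_lt_one)) y hy
    exact (h2.derivWithin hu).symm.trans (h1.derivWithin hu)
  -- the t-derivative of the predictor
  have hpt_eq : ∀ x' ∈ Icc (0 : ℝ) 1, pt x'
      = f (X t) (uh 0 t + ut0 t) + D * ∫ y in (0 : ℝ)..x', (pt y * a y + ut y * b y) := by
    intro x' hx'
    have hswap : Continuous fun p : ℝ × ℝ => ((p.2 : ℝ), (p.1 : ℝ)) :=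
      continuous_snd.prodMk continuous_fst
    have hphsw : Continuous fun p : ℝ × ℝ => ph p.2 p.1 := hpc.comp hswap
    have huhsw : Continuous fun p : ℝ × ℝ => uh p.2 p.1 := huc.comp hswap
    have hpairsw : Continuous fun p : ℝ × ℝ => (ph p.2 p.1, uh p.2 p.1) := hphsw.prodMk huhsw
    have contG : Continuous fun p : ℝ × ℝ => f (ph p.2 p.1) (uh p.2 p.1) := hfc.comp hpairsw
    have contA : Continuous fun p : ℝ × ℝ =>
        fderiv ℝ (Function.uncurry ph) (p.2, p.1) (0, 1)
            * fderiv ℝ (Function.uncurry f) (ph p.2 p.1, uh p.2 p.1) (1, 0)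
          + fderiv ℝ (Function.uncurry uh) (p.2, p.1) (0, 1)
            * fderiv ℝ (Function.uncurry f) (ph p.2 p.1, uh p.2 p.1) (0, 1) :=
      (((fderiv_apply_cont ph hph (0, 1)).comp hswap).mul
          ((fderiv_apply_cont f hf (1, 0)).comp hpairsw)).add
        (((fderiv_apply_cont uh huh (0, 1)).comp hswap).mul
          ((fderiv_apply_cont f hf (0, 1)).comp hpairsw))
    have hInt := hasDerivAt_param_integral (fun s y => f (ph y s) (uh y s))
      (fun s y =>
        fderiv ℝ (Function.uncurry ph) (y, s) (0, 1)
            * fderiv ℝ (Function.uncurry f) (ph y s, uh y s) (1, 0)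
          + fderiv ℝ (Function.uncurry uh) (y, s) (0, 1)
            * fderiv ℝ (Function.uncurry f) (ph y s, uh y s) (0, 1))
      contG contA
      (fun s y => comp_hasDerivAt f hf (fun s => ph y s) (fun s => uh y s) _ _ s
        (slice2_hasDerivAt ph hph y s) (slice2_hasDerivAt uh huh y s))
      x' t
    have hInt' : HasDerivAt (fun s => ∫ y in (0 : ℝ)..x', f (ph y s) (uh y s))
        (∫ y in (0 : ℝ)..x', (pt y * a y + ut y * b y)) t := hInt
    have hXR : HasDerivAt (fun s => X s + D * ∫ y in (0 : ℝ)..x', f (ph y s) (uh y s))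
        (f (X t) (uh 0 t + ut0 t) + D * ∫ y in (0 : ℝ)..x', (pt y * a y + ut y * b y)) t :=
      (hX t ht).add (hInt'.const_mul D)
    have h1 : HasDerivWithinAt (fun s => ph x' s)
        (f (X t) (uh 0 t + ut0 t) + D * ∫ y in (0 : ℝ)..x', (pt y * a y + ut y * b y))
        (Ici t0) t :=
      hXR.hasDerivWithinAt.congr (fun s hs => hpdef x' hx' s hs) (hpdef x' hx' t ht)
    have h2 : HasDerivWithinAt (fun s => ph x' s) (pt x') (Ici t0) t :=
      (slice2_hasDerivAt ph hph x' t).hasDerivWithinAt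
    have hu := uniqueDiffOn_Ici t0 t ht
    exact (h2.derivWithin hu).symm.trans (h1.derivWithin hu)
  -- FTC along x for f(p̂, û)
  have hftc : ∀ x' ∈ Icc (0 : ℝ) 1,
      (∫ y in (0 : ℝ)..x', (px y * a y + (D * ut y) * b y))
        = f (ph x' t) (uh x' t) - f (X t) (uh 0 t) := by
    intro x' hx'
    have hder : ∀ y, HasDerivAt (fun z => f (ph z t) (uh z t))
        (px y * a y + (D * ut y) * b y) y := by
      intro y
      have hEq : D * ut y = fderiv ℝ (Function.uncurry uh) (y, t) (1, 0) := by
        have h1 := huhPDE y t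
        rw [(slice2_hasDerivAt uh huh y t).deriv, (slice1_hasDerivAt uh huh y t).deriv] at h1
        exact h1
      have h2 : HasDerivAt (fun z => uh z t) (D * ut y) y :=
        hEq ▸ (slice1_hasDerivAt uh huh y t)
      exact comp_hasDerivAt f hf _ _ _ _ y (slice1_hasDerivAt ph hph y t) h2
    have hcont' : Continuous fun y => px y * a y + (D * ut y) * b y :=
      (hpx_c.mul ha_c).add ((continuous_const.mul hut_c).mul hb_c)
    have h3 := intervalIntegral.integral_eq_sub_of_hasDerivAt
      (a := (0:ℝ)) (b := x') (f := fun z => f (ph z t) (uh z t)) (fun y _ => hder y)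
      (hcont'.intervalIntegrable _ _)
    rw [h3]; simp [hph0]
  -- the Volterra integral equation for g = D p̂_t - p̂_x
  have hIE : ∀ x' ∈ Icc (0 : ℝ) 1,
      D * pt x' - px x' = D * c + D * ∫ y in (0 : ℝ)..x', a y * (D * pt y - px y) := by
    intro x' hx'
    have e1 := hpt_eq x' hx'
    have e2 := hpx_eq x' hx'
    have e3 := hftc x' hx'
    have i1 : IntervalIntegrable (fun y => pt y * a y) volume 0 x' :=
      (hpt_c.mul ha_c).intervalIntegrable _ _
    have i2 : IntervalIntegrable (fun y => ut y * b y) volume 0 x' :=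
      (hut_c.mul hb_c).intervalIntegrable _ _
    have i3 : IntervalIntegrable (fun y => px y * a y) volume 0 x' :=
      (hpx_c.mul ha_c).intervalIntegrable _ _
    have i4 : IntervalIntegrable (fun y => (D * ut y) * b y) volume 0 x' :=
      ((continuous_const.mul hut_c).mul hb_c).intervalIntegrable _ _
    have s1 : ∫ y in (0 : ℝ)..x', (pt y * a y + ut y * b y)
        = (∫ y in (0 : ℝ)..x', pt y * a y) + ∫ y in (0 : ℝ)..x', ut y * b y :=
      intervalIntegral.integral_add i1 i2
    have s2 : ∫ y in (0 : ℝ)..x', (px y * a y + (D * ut y) * b y)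
        = (∫ y in (0 : ℝ)..x', px y * a y) + ∫ y in (0 : ℝ)..x', (D * ut y) * b y :=
      intervalIntegral.integral_add i3 i4
    have s3 : ∫ y in (0 : ℝ)..x', (D * ut y) * b y = D * ∫ y in (0 : ℝ)..x', ut y * b y := by
      simp_rw [mul_assoc]
      exact intervalIntegral.integral_const_mul D _
    have s4 : ∫ y in (0 : ℝ)..x', a y * (D * pt y - px y)
        = D * (∫ y in (0 : ℝ)..x', pt y * a y) - ∫ y in (0 : ℝ)..x', px y * a y := by
      have hfun : (fun y => a y * (D * pt y - px y))
          = fun y => D * (pt y * a y) - px y * a y := by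
        funext y; ring
      rw [hfun, intervalIntegral.integral_sub (i1.const_mul D) i3,
        intervalIntegral.integral_const_mul]
    rw [s1] at e1
    rw [s2, s3] at e3
    have e5 : f (ph x' t) (uh x' t)
        = f (X t) (uh 0 t) + ((∫ y in (0 : ℝ)..x', px y * a y)
            + D * ∫ y in (0 : ℝ)..x', ut y * b y) := by linarith [e3]
    rw [s4, e1, e2, e5, hcdef]
    ring
  -- Gronwall / ODE uniqueness
  have hg_c : Continuous fun y => D * pt y - px y := (continuous_const.mul hpt_c).sub hpx_c
  have hDa_c : Continuous fun y => D * a y := continuous_const.mul ha_c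
  have hg := gronwall_aux (fun y => D * a y) (fun y => D * pt y - px y) hDa_c hg_c (D * c)
    (by
      intro u hu
      show D * pt u - px u = _
      rw [hIE u hu]
      congr 1
      rw [← intervalIntegral.integral_const_mul]
      congr 1
      funext y
      ring)
  have hgx := hg x hx
  have hInt_eq : (∫ y in (0 : ℝ)..x, D * a y) = D * ∫ y in (0 : ℝ)..x, a y :=
    intervalIntegral.integral_const_mul _ _
  rw [hInt_eq] at hgx
  have d1 : deriv (fun s => ph x s) t = pt x := (slice2_hasDerivAt ph hph x t).deriv
  have d2 : deriv (fun y => ph y t) x = px x := (slice1_hasDerivAt ph hph x t).deriv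
  have d3 : ∀ y, deriv (fun z => f z (uh y t)) (ph y t) = a y :=
    fun y => (slice1_hasDerivAt f hf (ph y t) (uh y t)).deriv
  rw [d1, d2]
  simp only [d3]
  linear_combination hgx
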